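/- Let λ₁, λ₂, λ₃ > 0 and let M be the symmetric 3×3 real matrix with entries Mᵢⱼ = (λ₁² + λ₂² + λ₃²)·λᵢ²·δᵢⱼ − λᵢ²·λⱼ², i.e. M has diagonal entries λᵢ²·(sum of the squares of the other two λ's) and off-diagonal entries −λᵢ²λⱼ². Then M is positive semidefinite, det M = 0, and for a vector h ∈ ℝ³ one has ⟨M h, h⟩ = 0 if and only if h₁ = h₂ = h₃ (i.e. the kernel of the quadratic form is exactly the span of (1,1,1)). -/

import Mathlib

open Matrix

noncomputable section

theorem stmt_3 (lam : Fin 3 → ℝ) (hlam : ∀ i, 0 < lam i)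
    (M : Matrix (Fin 3) (Fin 3) ℝ)
    (hM : ∀ i j, M i j =
      (lam 0 ^ 2 + lam 1 ^ 2 + lam 2 ^ 2) * lam i ^ 2 * (if i = j then 1 else 0)
        - lam i ^ 2 * lam j ^ 2) :
    M.PosSemidef ∧ M.det = 0 ∧
    ∀ h : Fin 3 → ℝ, (M.mulVec h) ⬝ᵥ h = 0 ↔ (h 0 = h 1 ∧ h 1 = h 2) := by
  have key : ∀ h : Fin 3 → ℝ, (M.mulVec h) ⬝ᵥ h =
      (lam 0 * lam 1)^2 * (h 0 - h 1)^2 + (lam 0 * lam 2)^2 * (h 0 - h 2)^2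
        + (lam 1 * lam 2)^2 * (h 1 - h 2)^2 := by
    intro h
    simp only [mulVec, dotProduct, Fin.sum_univ_three, hM]
    norm_num [Fin.ext_iff]
    ring
  have hsym : M.IsHermitian := by
    ext i j
    simp only [conjTranspose_apply, star_trivial, hM]
    by_cases hij : i = j <;> simp [hij, eq_comm] <;> ring
  have h01 : 0 < (lam 0 * lam 1)^2 := pow_pos (mul_pos (hlam 0) (hlam 1)) 2
  have h02 : 0 < (lam 0 * lam 2)^2 := pow_pos (mul_pos (hlam 0) (hlam 2)) 2
  have h12 : 0 < (lam 1 * lam 2)^2 := pow_pos (mul_pos (hlam 1) (hlam 2)) 2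
  refine ⟨PosSemidef.of_dotProduct_mulVec_nonneg hsym ?_, ?_, ?_⟩
  · intro x
    rw [star_trivial, dotProduct_comm, key]
    have := sq_nonneg (x 0 - x 1); have := sq_nonneg (x 0 - x 2); have := sq_nonneg (x 1 - x 2)
    nlinarith [mul_nonneg h01.le (sq_nonneg (x 0 - x 1)), mul_nonneg h02.le (sq_nonneg (x 0 - x 2)), mul_nonneg h12.le (sq_nonneg (x 1 - x 2))]
  · simp only [Matrix.det_fin_three, hM]
    norm_num [Fin.ext_iff]
    ring
  · intro h
    rw [key]
    constructor
    · intro heq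
      have n1 : 0 ≤ (lam 0 * lam 1)^2 * (h 0 - h 1)^2 := mul_nonneg h01.le (sq_nonneg _)
      have n2 : 0 ≤ (lam 0 * lam 2)^2 * (h 0 - h 2)^2 := mul_nonneg h02.le (sq_nonneg _)
      have n3 : 0 ≤ (lam 1 * lam 2)^2 * (h 1 - h 2)^2 := mul_nonneg h12.le (sq_nonneg _)
      have z1 : (lam 0 * lam 1)^2 * (h 0 - h 1)^2 = 0 := le_antisymm (by linarith) n1
      have z3 : (lam 1 * lam 2)^2 * (h 1 - h 2)^2 = 0 := le_antisymm (by linarith) n3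
      have d1 : (h 0 - h 1)^2 = 0 := (mul_eq_zero.mp z1).resolve_left h01.ne'
      have d3 : (h 1 - h 2)^2 = 0 := (mul_eq_zero.mp z3).resolve_left h12.ne'
      have e1 := sq_eq_zero_iff.mp d1
      have e3 := sq_eq_zero_iff.mp d3
      constructor <;> linarith
    · rintro ⟨e1, e2⟩
      rw [e1, e2]
      ring
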